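/- arXiv:1812.10038 — 6 statements merged into one kernel-verified Lean document; each statement's English description precedes it below -/
import Mathlib

section
/- Let m₁ > 1, m₂ < 0 and κ ∈ (0,1). Define f(w) = (m₁−1)m₂(1−w^{1−m₂})(w^{m₁}−κ) − m₁(m₂−1)(w^{m₁}−w)(1−κw^{−m₂}) for w ∈ (0,1). Then f(w) < 0 for all w ∈ (κ, 1). -/
theorem stmt_1 (m₁ m₂ κ : ℝ) (hm₁ : 1 < m₁) (hm₂ : m₂ < 0)
    (hκ : κ ∈ Set.Ioo (0:ℝ) 1) :
    ∀ w ∈ Set.Ioo κ 1,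
      (m₁ - 1) * m₂ * (1 - w ^ (1 - m₂)) * (w ^ m₁ - κ)
        - m₁ * (m₂ - 1) * (w ^ m₁ - w) * (1 - κ * w ^ (-m₂)) < 0 := by
  obtain ⟨hκ0, hκ1⟩ := hκ
  rintro w ⟨hwκ, hw1⟩
  have hw0 : (0:ℝ) < w := lt_trans hκ0 hwκ
  have hQeq : w ^ (1 - m₂) = w * w ^ (-m₂) := by
    rw [show (1:ℝ) - m₂ = 1 + (-m₂) by ring, Real.rpow_add hw0, Real.rpow_one]
  set P := w ^ m₁ with hP
  set Q := w ^ (-m₂) with hQ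
  have hQ0 : 0 < Q := Real.rpow_pos_of_pos hw0 _
  have hQ1 : Q < 1 := Real.rpow_lt_one hw0.le hw1 (by linarith)
  have hP0 : 0 < P := Real.rpow_pos_of_pos hw0 _
  have hPw : P < w := by
    have := Real.rpow_lt_rpow_of_exponent_gt hw0 hw1 hm₁
    rwa [Real.rpow_one] at this
  rw [hQeq]
  have hb : 1 - w * Q < 1 - κ * Q := by nlinarith
  have hbpos : 0 < 1 - w * Q := by nlinarith
  have hb'pos : 0 < 1 - κ * Q := by nlinarith
  rcases le_or_gt κ P with hc | hc
  · -- first term ≤ 0, second term contributes strictly negatively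
    have h1 : (m₁ - 1) * m₂ * (1 - w * Q) * (P - κ) ≤ 0 := by
      apply mul_nonpos_of_nonpos_of_nonneg
      · nlinarith [mul_neg_of_neg_of_pos
          (mul_neg_of_pos_of_neg (by linarith : (0:ℝ) < m₁ - 1) hm₂) hbpos]
      · linarith
    have h2 : 0 < m₁ * (1 - m₂) * ((w - P) * (1 - κ * Q)) :=
      mul_pos (mul_pos (by linarith) (by linarith))
        (mul_pos (by linarith) hb'pos)
    nlinarith [h1, h2]
  · -- κ > P : chain three inequalities
    have ha : (m₁ - 1) * (-m₂) < m₁ * (1 - m₂) := by nlinarith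
    have hapos : 0 < (m₁ - 1) * (-m₂) := by nlinarith
    have hcc : κ - P < w - P := by linarith
    have hcpos : 0 < κ - P := by linarith
    have key : (m₁ - 1) * (-m₂) * ((1 - w * Q) * (κ - P))
        < m₁ * (1 - m₂) * ((1 - κ * Q) * (w - P)) := by
      have hstep : (1 - w * Q) * (κ - P) < (1 - κ * Q) * (w - P) := by
        apply mul_lt_mul hb hcc.le hcpos (by linarith)
      calc (m₁ - 1) * (-m₂) * ((1 - w * Q) * (κ - P))
          < m₁ * (1 - m₂) * ((1 - w * Q) * (κ - P)) := by
            exact mul_lt_mul_of_pos_right ha (by positivity)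
        _ < m₁ * (1 - m₂) * ((1 - κ * Q) * (w - P)) := by
            exact mul_lt_mul_of_pos_left hstep (by nlinarith)
    nlinarith [key]
end

section
/- Let m₁ > 1, m₂ < 0 and κ ∈ (0,1), and define f(w) = (m₁−1)m₂(1−w^{1−m₂})(w^{m₁}−κ) − m₁(m₂−1)(w^{m₁}−w)(1−κw^{−m₂}). Then lim_{w→0⁺} f(w) = −(m₁−1)m₂κ > 0 and f(κ) = (m₁−m₂)(1−κ^{1−m₂})(κ^{m₁}−κ) < 0; consequently f has a zero in the open interval (0, κ). -/
theorem stmt_2 (m₁ m₂ κ : ℝ) (hm₁ : 1 < m₁) (hm₂ : m₂ < 0)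
    (hκ0 : 0 < κ) (hκ1 : κ < 1) :
    Filter.Tendsto (fun w : ℝ =>
        (m₁ - 1) * m₂ * (1 - w ^ (1 - m₂)) * (w ^ m₁ - κ)
          - m₁ * (m₂ - 1) * (w ^ m₁ - w) * (1 - κ * w ^ (-m₂)))
      (nhdsWithin 0 (Set.Ioi 0)) (nhds (-((m₁ - 1) * m₂ * κ)))
    ∧ 0 < -((m₁ - 1) * m₂ * κ)
    ∧ (m₁ - 1) * m₂ * (1 - κ ^ (1 - m₂)) * (κ ^ m₁ - κ)
        - m₁ * (m₂ - 1) * (κ ^ m₁ - κ) * (1 - κ * κ ^ (-m₂))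
        = (m₁ - m₂) * (1 - κ ^ (1 - m₂)) * (κ ^ m₁ - κ)
    ∧ (m₁ - m₂) * (1 - κ ^ (1 - m₂)) * (κ ^ m₁ - κ) < 0
    ∧ ∃ w ∈ Set.Ioo 0 κ,
        (m₁ - 1) * m₂ * (1 - w ^ (1 - m₂)) * (w ^ m₁ - κ)
          - m₁ * (m₂ - 1) * (w ^ m₁ - w) * (1 - κ * w ^ (-m₂)) = 0 := by
  set f : ℝ → ℝ := fun w =>
      (m₁ - 1) * m₂ * (1 - w ^ (1 - m₂)) * (w ^ m₁ - κ)
        - m₁ * (m₂ - 1) * (w ^ m₁ - w) * (1 - κ * w ^ (-m₂)) with hf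
  have h1m₂ : (0:ℝ) < 1 - m₂ := by linarith
  have hnm₂ : (0:ℝ) < -m₂ := by linarith
  have hm₁0 : (0:ℝ) < m₁ := by linarith
  have hcontAt : ∀ x : ℝ, x ≠ 0 ∨ True → ContinuousAt f x := by
    intro x hx
    have c1 : ContinuousAt (fun w : ℝ => w ^ (1 - m₂)) x :=
      Real.continuousAt_rpow_const x _ (hx.imp id (fun _ => h1m₂.le))
    have c2 : ContinuousAt (fun w : ℝ => w ^ m₁) x :=
      Real.continuousAt_rpow_const x _ (hx.imp id (fun _ => hm₁0.le))
    have c3 : ContinuousAt (fun w : ℝ => w ^ (-m₂)) x :=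
      Real.continuousAt_rpow_const x _ (hx.imp id (fun _ => hnm₂.le))
    exact ((continuousAt_const.mul (continuousAt_const.sub c1)).mul
        (c2.sub continuousAt_const)).sub
      ((continuousAt_const.mul (c2.sub continuousAt_id)).mul
        (continuousAt_const.sub (continuousAt_const.mul c3)))
  have hf0 : f 0 = -((m₁ - 1) * m₂ * κ) := by
    simp only [hf, Real.zero_rpow (ne_of_gt h1m₂), Real.zero_rpow (ne_of_gt hm₁0),
      Real.zero_rpow (ne_of_gt hnm₂)]
    ring
  have htend : Filter.Tendsto f (nhdsWithin 0 (Set.Ioi 0))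
      (nhds (-((m₁ - 1) * m₂ * κ))) := by
    have := (hcontAt 0 (Or.inr trivial)).tendsto
    rw [hf0] at this
    exact this.mono_left nhdsWithin_le_nhds
  have hpos : 0 < -((m₁ - 1) * m₂ * κ) := by nlinarith [mul_pos (mul_pos (show (0:ℝ) < m₁ - 1 by linarith) hnm₂) hκ0]
  have hκeq : κ * κ ^ (-m₂) = κ ^ (1 - m₂) := by
    rw [← Real.rpow_one_add' (le_of_lt hκ0) (by linarith)]
    ring_nf
  have heq : f κ = (m₁ - m₂) * (1 - κ ^ (1 - m₂)) * (κ ^ m₁ - κ) := by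
    simp only [hf, hκeq]; ring
  have hX : 0 < 1 - κ ^ (1 - m₂) := by
    have := Real.rpow_lt_one (le_of_lt hκ0) hκ1 h1m₂
    linarith
  have hY : κ ^ m₁ - κ < 0 := by
    have := Real.rpow_lt_rpow_of_exponent_gt hκ0 hκ1 hm₁
    rw [Real.rpow_one] at this
    linarith
  have hneg : (m₁ - m₂) * (1 - κ ^ (1 - m₂)) * (κ ^ m₁ - κ) < 0 :=
    mul_neg_of_pos_of_neg (mul_pos (by linarith) hX) hY
  refine ⟨htend, hpos, by rw [← heq], hneg, ?_⟩
  -- find w₀ ∈ (0, κ) with f w₀ > 0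
  have hev : ∀ᶠ w in nhdsWithin 0 (Set.Ioi 0), 0 < f w :=
    htend.eventually (eventually_gt_nhds hpos)
  have hmem : Set.Ioo (0:ℝ) κ ∈ nhdsWithin 0 (Set.Ioi 0) :=
    Ioo_mem_nhdsGT_of_mem ⟨le_refl 0, hκ0⟩
  obtain ⟨w₀, hw₀f, hw₀⟩ := (hev.and (Filter.eventually_of_mem hmem fun _ h => h)).exists
  have hcont : ContinuousOn f (Set.Icc w₀ κ) := by
    intro x hx
    exact (hcontAt x (Or.inl (ne_of_gt (lt_of_lt_of_le hw₀.1 hx.1)))).continuousWithinAt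
  have hsub := intermediate_value_Ioo' (le_of_lt hw₀.2) hcont
  have h0mem : (0:ℝ) ∈ Set.Ioo (f κ) (f w₀) := by
    constructor
    · rw [heq]; exact hneg
    · exact hw₀f
  obtain ⟨c, hc, hfc⟩ := hsub h0mem
  exact ⟨c, ⟨lt_trans hw₀.1 hc.1, hc.2⟩, hfc⟩
end

section
/- Let m₂ < 0 and κ ∈ (0,1). Define f₁(w) = 1 − m₂w^{1−m₂} + (m₂−1)κw^{−m₂} for w ∈ (0, κ). Then f₁ is strictly decreasing on (0, κ) and f₁(w) > 1 − κ^{1−m₂} > 0 for all w ∈ (0, κ). -/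
theorem stmt_4 (m₂ κ : ℝ) (hm₂ : m₂ < 0) (hκ : κ ∈ Set.Ioo (0:ℝ) 1) :
    StrictAntiOn (fun w : ℝ => 1 - m₂ * w ^ (1 - m₂) + (m₂ - 1) * κ * w ^ (-m₂))
      (Set.Ioo 0 κ)
    ∧ (∀ w ∈ Set.Ioo (0:ℝ) κ,
        1 - κ ^ (1 - m₂) < 1 - m₂ * w ^ (1 - m₂) + (m₂ - 1) * κ * w ^ (-m₂))
    ∧ 0 < 1 - κ ^ (1 - m₂) := by
  obtain ⟨hκ0, hκ1⟩ := hκ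
  set f : ℝ → ℝ := fun w => 1 - m₂ * w ^ (1 - m₂) + (m₂ - 1) * κ * w ^ (-m₂) with hf
  have hderiv : ∀ w : ℝ, 0 < w →
      HasDerivAt f ((-m₂) * (1 - m₂) * w ^ (-m₂ - 1) * (w - κ)) w := by
    intro w hw
    have hw0 : w ≠ 0 := ne_of_gt hw
    have h1 : HasDerivAt (fun w : ℝ => w ^ (1 - m₂)) ((1 - m₂) * w ^ (1 - m₂ - 1)) w :=
      Real.hasDerivAt_rpow_const (Or.inl hw0)
    have h2 : HasDerivAt (fun w : ℝ => w ^ (-m₂)) ((-m₂) * w ^ (-m₂ - 1)) w :=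
      Real.hasDerivAt_rpow_const (Or.inl hw0)
    have h := ((h1.const_mul m₂).const_sub 1).add (h2.const_mul ((m₂ - 1) * κ))
    convert h using 1
    · rfl
    · rfl
    · rfl
    have he : (1 - m₂ - 1 : ℝ) = -m₂ := by ring
    rw [he]
    have hrm : w ^ (-m₂) = w ^ (-m₂ - 1) * w := by
      rw [← Real.rpow_add_one hw0]; ring_nf
    rw [hrm]; ring
  have hconv : Convex ℝ (Set.Ioc (0:ℝ) κ) := convex_Ioc 0 κ
  have hanti : StrictAntiOn f (Set.Ioc 0 κ) := by
    apply strictAntiOn_of_deriv_neg hconv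
    · intro x hx
      exact (hderiv x hx.1).continuousAt.continuousWithinAt
    · intro x hx
      rw [interior_Ioc] at hx
      rw [(hderiv x hx.1).deriv]
      have h1 : 0 < -m₂ := by linarith
      have h2 : 0 < (1 : ℝ) - m₂ := by linarith
      have h3 : 0 < x ^ (-m₂ - 1) := Real.rpow_pos_of_pos hx.1 _
      have h4 : x - κ < 0 := by linarith [hx.2]
      nlinarith [mul_pos (mul_pos h1 h2) h3]
  have hfκ : f κ = 1 - κ ^ (1 - m₂) := by
    have : κ ^ (1 - m₂) = κ ^ (-m₂) * κ := by
      rw [← Real.rpow_add_one (ne_of_gt hκ0)]; ring_nf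
    simp only [hf]
    rw [this]; ring
  refine ⟨hanti.mono Set.Ioo_subset_Ioc_self, ?_, ?_⟩
  · intro w hw
    have h := hanti ⟨hw.1, le_of_lt hw.2⟩ ⟨hκ0, le_refl κ⟩ hw.2
    rw [hfκ] at h
    exact h
  · have : κ ^ (1 - m₂) < 1 := Real.rpow_lt_one (le_of_lt hκ0) hκ1 (by linarith)
    linarith
end

section
/- Let m₁ > 1, m₂ < 0, κ ∈ (0,1). Then the function f(w) = (m₁−1)m₂(1−w^{1−m₂})(w^{m₁}−κ) − m₁(m₂−1)(w^{m₁}−w)(1−κw^{−m₂}) has exactly one zero in (0,1), and this zero lies in (0, κ). -/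
open Set

/-- Bernoulli-type inequality for nonpositive exponents. -/
private lemma bern_neg {x p : ℝ} (hx : 0 < x) (hp : p ≤ 0) : 1 + p * (x - 1) ≤ x ^ p := by
  set r := -p with hr
  have hr0 : 0 ≤ r := by simp [hr]; linarith
  have hxr : 0 < x ^ r := Real.rpow_pos_of_pos hx r
  have hxp : x ^ p = (x ^ r)⁻¹ := by
    rw [show p = -r by simp [hr], Real.rpow_neg hx.le]
  rcases le_or_gt (1 + p * (x - 1)) 0 with h | h
  · refine h.trans (le_of_lt ?_)
    rw [hxp]; positivity
  · have hr1 : (0:ℝ) < 1 + r := by linarith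
    have hw1 : (0:ℝ) ≤ r / (1 + r) := by positivity
    have hw2 : (0:ℝ) ≤ 1 / (1 + r) := by positivity
    have hsum : r / (1 + r) + 1 / (1 + r) = 1 := by field_simp; ring
    have amgm := Real.geom_mean_le_arith_mean2_weighted hw1 hw2 hx.le h.le hsum
    have hrhs : r / (1 + r) * x + 1 / (1 + r) * (1 + p * (x - 1)) = 1 := by
      rw [show p = -r by simp [hr]]; field_simp; ring
    rw [hrhs] at amgm
    have hprod : (x ^ (r / (1 + r)) * (1 + p * (x - 1)) ^ (1 / (1 + r))) ^ (1 + r)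
        = x ^ r * (1 + p * (x - 1)) := by
      rw [Real.mul_rpow (Real.rpow_nonneg hx.le _) (Real.rpow_nonneg h.le _),
        ← Real.rpow_mul hx.le, ← Real.rpow_mul h.le,
        div_mul_cancel₀ _ (ne_of_gt hr1), div_mul_cancel₀ _ (ne_of_gt hr1), Real.rpow_one]
    have key : x ^ r * (1 + p * (x - 1)) ≤ 1 := by
      calc x ^ r * (1 + p * (x - 1))
          = (x ^ (r / (1 + r)) * (1 + p * (x - 1)) ^ (1 / (1 + r))) ^ (1 + r) := hprod.symm
        _ ≤ 1 ^ (1 + r) := Real.rpow_le_rpow (by positivity) amgm (by linarith)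
        _ = 1 := Real.one_rpow _
    rw [hxp]
    nlinarith [key, hxr, mul_inv_cancel₀ (ne_of_gt hxr)]

private noncomputable def Gf (m₁ m₂ κ : ℝ) : ℝ → ℝ := fun w =>
  (m₁ - m₂) * w ^ m₁ - (m₁ - 1) * m₂ * κ - (m₁ - 1) * m₂ * w ^ (m₁ + 1 - m₂)
    + (m₁ - m₂) * κ * w ^ (1 - m₂) + m₁ * (m₂ - 1) * w + m₁ * (m₂ - 1) * κ * w ^ (m₁ - m₂)

private noncomputable def Gf1 (m₁ m₂ κ : ℝ) : ℝ → ℝ := fun w =>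
  (m₁ - m₂) * m₁ * w ^ (m₁ - 1) - (m₁ - 1) * m₂ * (m₁ + 1 - m₂) * w ^ (m₁ - m₂)
    + (m₁ - m₂) * κ * (1 - m₂) * w ^ (-m₂) + m₁ * (m₂ - 1)
    + m₁ * (m₂ - 1) * κ * (m₁ - m₂) * w ^ (m₁ - m₂ - 1)

private noncomputable def Gf2 (m₁ m₂ κ : ℝ) : ℝ → ℝ := fun w =>
  (m₁ - m₂) * m₁ * (m₁ - 1) * w ^ (m₁ - 2)
    - (m₁ - 1) * m₂ * (m₁ + 1 - m₂) * (m₁ - m₂) * w ^ (m₁ - m₂ - 1)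
    + (m₁ - m₂) * κ * (1 - m₂) * (-m₂) * w ^ (-m₂ - 1)
    + m₁ * (m₂ - 1) * κ * (m₁ - m₂) * (m₁ - m₂ - 1) * w ^ (m₁ - m₂ - 2)

private lemma hasDeriv_Gf (m₁ m₂ κ : ℝ) {x : ℝ} (hx : 0 < x) :
    HasDerivAt (Gf m₁ m₂ κ) (Gf1 m₁ m₂ κ x) x := by
  have h1 : HasDerivAt (fun w : ℝ => w ^ m₁) (m₁ * x ^ (m₁ - 1)) x :=
    Real.hasDerivAt_rpow_const (Or.inl hx.ne')
  have h2 : HasDerivAt (fun w : ℝ => w ^ (m₁ + 1 - m₂)) ((m₁ + 1 - m₂) * x ^ (m₁ + 1 - m₂ - 1)) x :=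
    Real.hasDerivAt_rpow_const (Or.inl hx.ne')
  have h3 : HasDerivAt (fun w : ℝ => w ^ (1 - m₂)) ((1 - m₂) * x ^ (1 - m₂ - 1)) x :=
    Real.hasDerivAt_rpow_const (Or.inl hx.ne')
  have h5 : HasDerivAt (fun w : ℝ => w ^ (m₁ - m₂)) ((m₁ - m₂) * x ^ (m₁ - m₂ - 1)) x :=
    Real.hasDerivAt_rpow_const (Or.inl hx.ne')
  have H := (((((h1.const_mul (m₁ - m₂)).sub_const ((m₁ - 1) * m₂ * κ)).sub
      (h2.const_mul ((m₁ - 1) * m₂))).add (h3.const_mul ((m₁ - m₂) * κ))).add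
      ((hasDerivAt_id x).const_mul (m₁ * (m₂ - 1)))).add (h5.const_mul (m₁ * (m₂ - 1) * κ))
  unfold Gf
  exact H.congr_deriv (by
    rw [show m₁ + 1 - m₂ - 1 = m₁ - m₂ by ring, show (1:ℝ) - m₂ - 1 = -m₂ by ring]
    unfold Gf1
    ring)

private lemma hasDeriv_Gf1 (m₁ m₂ κ : ℝ) {x : ℝ} (hx : 0 < x) :
    HasDerivAt (Gf1 m₁ m₂ κ) (Gf2 m₁ m₂ κ x) x := by
  have h1 : HasDerivAt (fun w : ℝ => w ^ (m₁ - 1)) ((m₁ - 1) * x ^ (m₁ - 1 - 1)) x :=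
    Real.hasDerivAt_rpow_const (Or.inl hx.ne')
  have h2 : HasDerivAt (fun w : ℝ => w ^ (m₁ - m₂)) ((m₁ - m₂) * x ^ (m₁ - m₂ - 1)) x :=
    Real.hasDerivAt_rpow_const (Or.inl hx.ne')
  have h3 : HasDerivAt (fun w : ℝ => w ^ (-m₂)) ((-m₂) * x ^ (-m₂ - 1)) x :=
    Real.hasDerivAt_rpow_const (Or.inl hx.ne')
  have h5 : HasDerivAt (fun w : ℝ => w ^ (m₁ - m₂ - 1)) ((m₁ - m₂ - 1) * x ^ (m₁ - m₂ - 1 - 1)) x :=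
    Real.hasDerivAt_rpow_const (Or.inl hx.ne')
  have H := ((((h1.const_mul ((m₁ - m₂) * m₁)).sub
      (h2.const_mul ((m₁ - 1) * m₂ * (m₁ + 1 - m₂)))).add
      (h3.const_mul ((m₁ - m₂) * κ * (1 - m₂)))).add_const (m₁ * (m₂ - 1))).add
      (h5.const_mul (m₁ * (m₂ - 1) * κ * (m₁ - m₂)))
  unfold Gf1
  exact H.congr_deriv (by
    rw [show m₁ - 1 - 1 = m₁ - 2 by ring, show m₁ - m₂ - 1 - 1 = m₁ - m₂ - 2 by ring]
    unfold Gf2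
    ring)

theorem stmt_6 (m₁ m₂ κ : ℝ) (hm₁ : 1 < m₁) (hm₂ : m₂ < 0)
    (hκ : κ ∈ Set.Ioo (0:ℝ) 1) :
    (∃! w : ℝ, w ∈ Set.Ioo (0:ℝ) 1 ∧
      (m₁ - 1) * m₂ * (1 - w ^ (1 - m₂)) * (w ^ m₁ - κ)
        - m₁ * (m₂ - 1) * (w ^ m₁ - w) * (1 - κ * w ^ (-m₂)) = 0)
    ∧ ∀ w ∈ Set.Ioo (0:ℝ) 1,
        (m₁ - 1) * m₂ * (1 - w ^ (1 - m₂)) * (w ^ m₁ - κ)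
          - m₁ * (m₂ - 1) * (w ^ m₁ - w) * (1 - κ * w ^ (-m₂)) = 0 →
        w ∈ Set.Ioo (0:ℝ) κ := by
  obtain ⟨hκ0, hκ1⟩ := hκ
  -- F = G on (0, ∞)
  have hFG : ∀ w : ℝ, 0 < w →
      (m₁ - 1) * m₂ * (1 - w ^ (1 - m₂)) * (w ^ m₁ - κ)
        - m₁ * (m₂ - 1) * (w ^ m₁ - w) * (1 - κ * w ^ (-m₂)) = Gf m₁ m₂ κ w := by
    intro w hw
    have hw1 : w ^ (1 - m₂) = w * w ^ (-m₂) := by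
      rw [show (1:ℝ) - m₂ = 1 + -m₂ by ring, Real.rpow_add hw, Real.rpow_one]
    have hw2 : w ^ (m₁ + 1 - m₂) = w ^ m₁ * (w * w ^ (-m₂)) := by
      rw [show m₁ + 1 - m₂ = m₁ + (1 + -m₂) by ring, Real.rpow_add hw, Real.rpow_add hw,
        Real.rpow_one]
    have hw3 : w ^ (m₁ - m₂) = w ^ m₁ * w ^ (-m₂) := by
      rw [show m₁ - m₂ = m₁ + -m₂ by ring, Real.rpow_add hw]
    unfold Gf
    rw [hw1, hw2, hw3]
    ring
  -- F < 0 on [κ, 1)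
  have hFneg : ∀ w : ℝ, κ ≤ w → w < 1 →
      (m₁ - 1) * m₂ * (1 - w ^ (1 - m₂)) * (w ^ m₁ - κ)
        - m₁ * (m₂ - 1) * (w ^ m₁ - w) * (1 - κ * w ^ (-m₂)) < 0 := by
    intro w hκw hw1'
    have hw0 : 0 < w := lt_of_lt_of_le hκ0 hκw
    have hX : w ^ m₁ < w := by
      have := Real.rpow_lt_rpow_of_exponent_gt hw0 hw1' hm₁
      rwa [Real.rpow_one] at this
    have hV0 : 0 < w ^ (-m₂) := Real.rpow_pos_of_pos hw0 _
    have hu : w ^ (1 - m₂) < 1 := Real.rpow_lt_one hw0.le hw1' (by linarith)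
    have hw1eq : w ^ (1 - m₂) = w * w ^ (-m₂) := by
      rw [show (1:ℝ) - m₂ = 1 + -m₂ by ring, Real.rpow_add hw0, Real.rpow_one]
    have hA : 0 < (m₁ - 1) * (-m₂) := mul_pos (by linarith) (by linarith)
    have h1 : 0 < 1 - w ^ (1 - m₂) := by linarith
    have h2 : 1 - w ^ (1 - m₂) ≤ 1 - κ * w ^ (-m₂) := by
      rw [hw1eq]
      have : κ * w ^ (-m₂) ≤ w * w ^ (-m₂) := mul_le_mul_of_nonneg_right hκw hV0.le
      linarith
    have hkey : (m₁ - 1) * (-m₂) * (1 - w ^ (1 - m₂)) < m₁ * (1 - m₂) * (1 - κ * w ^ (-m₂)) := by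
      have h3 : (m₁ - 1) * (-m₂) < m₁ * (1 - m₂) := by nlinarith
      calc (m₁ - 1) * (-m₂) * (1 - w ^ (1 - m₂))
          ≤ (m₁ - 1) * (-m₂) * (1 - κ * w ^ (-m₂)) := mul_le_mul_of_nonneg_left h2 hA.le
        _ < m₁ * (1 - m₂) * (1 - κ * w ^ (-m₂)) := mul_lt_mul_of_pos_right h3 (by linarith)
    have hd : 0 < w - w ^ m₁ := by linarith
    have hfinal : (m₁ - 1) * (-m₂) * (1 - w ^ (1 - m₂)) * (κ - w ^ m₁)
        < m₁ * (1 - m₂) * (1 - κ * w ^ (-m₂)) * (w - w ^ m₁) := by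
      calc (m₁ - 1) * (-m₂) * (1 - w ^ (1 - m₂)) * (κ - w ^ m₁)
          ≤ (m₁ - 1) * (-m₂) * (1 - w ^ (1 - m₂)) * (w - w ^ m₁) :=
            mul_le_mul_of_nonneg_left (by linarith) (mul_nonneg hA.le h1.le)
        _ < _ := mul_lt_mul_of_pos_right hkey hd
    nlinarith [hfinal]
  have hGκ : Gf m₁ m₂ κ κ < 0 := by
    rw [← hFG κ hκ0]; exact hFneg κ le_rfl hκ1
  -- G 0 > 0
  have hG0 : 0 < Gf m₁ m₂ κ 0 := by
    unfold Gf
    rw [Real.zero_rpow (ne_of_gt (show (0:ℝ) < m₁ by linarith)),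
      Real.zero_rpow (ne_of_gt (show (0:ℝ) < m₁ + 1 - m₂ by linarith)),
      Real.zero_rpow (ne_of_gt (show (0:ℝ) < 1 - m₂ by linarith)),
      Real.zero_rpow (ne_of_gt (show (0:ℝ) < m₁ - m₂ by linarith))]
    nlinarith [mul_pos (mul_pos (show (0:ℝ) < m₁ - 1 by linarith)
      (show (0:ℝ) < -m₂ by linarith)) hκ0]
  -- continuity on [0, κ]
  have hGcont : ContinuousOn (Gf m₁ m₂ κ) (Icc 0 κ) := by
    have c1 : ContinuousOn (fun w : ℝ => w ^ m₁) (Icc 0 κ) :=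
      continuousOn_id.rpow_const fun x _ => Or.inr (by linarith)
    have c2 : ContinuousOn (fun w : ℝ => w ^ (m₁ + 1 - m₂)) (Icc 0 κ) :=
      continuousOn_id.rpow_const fun x _ => Or.inr (by linarith)
    have c3 : ContinuousOn (fun w : ℝ => w ^ (1 - m₂)) (Icc 0 κ) :=
      continuousOn_id.rpow_const fun x _ => Or.inr (by linarith)
    have c4 : ContinuousOn (fun w : ℝ => w ^ (m₁ - m₂)) (Icc 0 κ) :=
      continuousOn_id.rpow_const fun x _ => Or.inr (by linarith)
    exact (((((continuousOn_const.mul c1).sub continuousOn_const).sub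
      (continuousOn_const.mul c2)).add (continuousOn_const.mul c3)).add
      (continuousOn_const.mul continuousOn_id)).add (continuousOn_const.mul c4)
  -- existence of a root in (0, κ)
  obtain ⟨c, hcmem, hc⟩ := intermediate_value_Icc' hκ0.le hGcont ⟨hGκ.le, hG0.le⟩
  have hc0 : 0 < c := lt_of_le_of_ne hcmem.1 fun h => by rw [← h] at hc; linarith [hG0]
  have hcκ : c < κ := lt_of_le_of_ne hcmem.2 fun h => by rw [h] at hc; linarith [hGκ]
  -- strict convexity of G on (0, κ]
  have hGconv : StrictConvexOn ℝ (Ioc 0 κ) (Gf m₁ m₂ κ) := by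
    apply strictConvexOn_of_deriv2_pos (convex_Ioc 0 κ) (hGcont.mono Ioc_subset_Icc_self)
    intro x hx
    rw [interior_Ioc] at hx
    obtain ⟨hx0, hxκ⟩ := hx
    have h2d : deriv^[2] (Gf m₁ m₂ κ) x = Gf2 m₁ m₂ κ x := by
      have hev : deriv (Gf m₁ m₂ κ) =ᶠ[nhds x] Gf1 m₁ m₂ κ :=
        Filter.eventuallyEq_of_mem (isOpen_Ioi.mem_nhds hx0)
          fun y hy => (hasDeriv_Gf m₁ m₂ κ hy).deriv
      show deriv (deriv (Gf m₁ m₂ κ)) x = Gf2 m₁ m₂ κ x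
      rw [hev.deriv_eq]
      exact (hasDeriv_Gf1 m₁ m₂ κ hx0).deriv
    rw [h2d]
    -- positivity of the second derivative
    have e1 : x ^ (m₁ - 2) = x ^ (m₁ - m₂ - 2) * x ^ m₂ := by
      rw [show m₁ - 2 = m₁ - m₂ - 2 + m₂ by ring, Real.rpow_add hx0]
    have e2 : x ^ (m₁ - m₂ - 1) = x ^ (m₁ - m₂ - 2) * x := by
      rw [show m₁ - m₂ - 1 = m₁ - m₂ - 2 + 1 by ring, Real.rpow_add hx0, Real.rpow_one]
    have e3 : x ^ (-m₂ - 1) = x ^ (m₁ - m₂ - 2) * x ^ (1 - m₁) := by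
      rw [show -m₂ - 1 = m₁ - m₂ - 2 + (1 - m₁) by ring, Real.rpow_add hx0]
    have hP : 0 < x ^ (m₁ - m₂ - 2) := Real.rpow_pos_of_pos hx0 _
    have hb1 : 1 + m₂ * (x - 1) ≤ x ^ m₂ := bern_neg hx0 hm₂.le
    have hb2 : 1 + (1 - m₁) * (x - 1) ≤ x ^ (1 - m₁) := bern_neg hx0 (by linarith)
    have hL : 0 < m₁ * (m₁ - 1) * (1 + m₂ * (x - 1)) + (m₁ - 1) * (-m₂) * (m₁ + 1 - m₂) * x
        + κ * (1 - m₂) * (-m₂) * (1 + (1 - m₁) * (x - 1)) - m₁ * (1 - m₂) * (m₁ - m₂ - 1) * κ := by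
      have key : κ * (m₁ * (m₁ - 1) * (1 + m₂ * (x - 1)) + (m₁ - 1) * (-m₂) * (m₁ + 1 - m₂) * x
          + κ * (1 - m₂) * (-m₂) * (1 + (1 - m₁) * (x - 1)) - m₁ * (1 - m₂) * (m₁ - m₂ - 1) * κ)
          = (κ - x) * (m₁ * (1 - m₂) * (m₁ - 1) * (1 - κ))
            + x * ((m₁ - 1) * (1 - m₂) * (1 - κ) * (m₁ - m₂ * κ)) := by ring
      have hp1 : 0 < (κ - x) * (m₁ * (1 - m₂) * (m₁ - 1) * (1 - κ)) := by
        apply mul_pos (by linarith)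
        apply mul_pos (mul_pos (mul_pos (by linarith) (by linarith)) (by linarith)) (by linarith)
      have hp2 : 0 < x * ((m₁ - 1) * (1 - m₂) * (1 - κ) * (m₁ - m₂ * κ)) := by
        apply mul_pos hx0
        apply mul_pos (mul_pos (mul_pos (by linarith) (by linarith)) (by linarith)) (by nlinarith)
      have hκL : 0 < κ * (m₁ * (m₁ - 1) * (1 + m₂ * (x - 1)) + (m₁ - 1) * (-m₂) * (m₁ + 1 - m₂) * x
          + κ * (1 - m₂) * (-m₂) * (1 + (1 - m₁) * (x - 1))
          - m₁ * (1 - m₂) * (m₁ - m₂ - 1) * κ) := by rw [key]; linarith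
      exact (mul_pos_iff_of_pos_left hκ0).mp hκL
    have hEin : 0 < m₁ * (m₁ - 1) * x ^ m₂ + (m₁ - 1) * (-m₂) * (m₁ + 1 - m₂) * x
        + κ * (1 - m₂) * (-m₂) * x ^ (1 - m₁) - m₁ * (1 - m₂) * (m₁ - m₂ - 1) * κ := by
      have t1 : 0 ≤ m₁ * (m₁ - 1) * (x ^ m₂ - (1 + m₂ * (x - 1))) :=
        mul_nonneg (by nlinarith) (by linarith)
      have t2 : 0 ≤ κ * (1 - m₂) * (-m₂) * (x ^ (1 - m₁) - (1 + (1 - m₁) * (x - 1))) :=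
        mul_nonneg (mul_nonneg (mul_nonneg hκ0.le (by linarith)) (by linarith)) (by linarith)
      nlinarith [hL, t1, t2]
    have hfin : Gf2 m₁ m₂ κ x = x ^ (m₁ - m₂ - 2) * ((m₁ - m₂) *
        (m₁ * (m₁ - 1) * x ^ m₂ + (m₁ - 1) * (-m₂) * (m₁ + 1 - m₂) * x
          + κ * (1 - m₂) * (-m₂) * x ^ (1 - m₁) - m₁ * (1 - m₂) * (m₁ - m₂ - 1) * κ)) := by
      unfold Gf2
      rw [e1, e2, e3]
      ring
    rw [hfin]
    exact mul_pos hP (mul_pos (by linarith) hEin)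
  -- every root in (0,1) lies in (0, κ)
  have hroot_lt : ∀ w ∈ Set.Ioo (0:ℝ) 1,
      (m₁ - 1) * m₂ * (1 - w ^ (1 - m₂)) * (w ^ m₁ - κ)
        - m₁ * (m₂ - 1) * (w ^ m₁ - w) * (1 - κ * w ^ (-m₂)) = 0 → w ∈ Set.Ioo (0:ℝ) κ := by
    intro w hw h0
    refine ⟨hw.1, ?_⟩
    by_contra hge
    push_neg at hge
    exact absurd h0 (ne_of_lt (hFneg w hge hw.2))
  -- no two roots of G in (0, κ)
  have pair : ∀ a b : ℝ, a ∈ Ioo (0:ℝ) κ → b ∈ Ioo (0:ℝ) κ →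
      Gf m₁ m₂ κ a = 0 → Gf m₁ m₂ κ b = 0 → a < b → False := by
    intro a b ha hb hga hgb hab
    have hden : 0 < κ - a := by linarith [ha.2]
    have hσ : 0 < (κ - b) / (κ - a) := div_pos (by linarith [hb.2]) hden
    have hτ : 0 < (b - a) / (κ - a) := div_pos (by linarith) hden
    have hστ : (κ - b) / (κ - a) + (b - a) / (κ - a) = 1 := by field_simp; ring
    have H := hGconv.2 (x := a) ⟨ha.1, ha.2.le⟩ (y := κ) ⟨hκ0, le_refl κ⟩
      (ne_of_lt ha.2) hσ hτ hστ
    have hcomb : ((κ - b) / (κ - a)) • a + ((b - a) / (κ - a)) • κ = b := by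
      simp only [smul_eq_mul]
      rw [div_mul_eq_mul_div, div_mul_eq_mul_div, ← add_div, div_eq_iff hden.ne']
      ring
    rw [hcomb, hga, hgb] at H
    simp only [smul_eq_mul, mul_zero, zero_add] at H
    have := mul_neg_of_pos_of_neg hτ hGκ
    linarith
  have hcIoo : c ∈ Ioo (0:ℝ) κ := ⟨hc0, hcκ⟩
  constructor
  · refine ⟨c, ⟨⟨hc0, hcκ.trans hκ1⟩, ?_⟩, ?_⟩
    · rw [hFG c hc0]; exact hc
    · rintro y ⟨hy1, hy0⟩
      have hyκ := hroot_lt y hy1 hy0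
      have hGy : Gf m₁ m₂ κ y = 0 := by rw [← hFG y hyκ.1]; exact hy0
      rcases lt_trichotomy y c with h | h | h
      · exact (pair y c hyκ hcIoo hGy hc h).elim
      · exact h
      · exact (pair c y hcIoo hyκ hc hGy h).elim
  · exact hroot_lt
end

section
/- Let m₁ > 1, m₂ < 0, b_α > 0, D₁ > 0, D₂ < 0, r > 0, δ > 0, α ≥ 0 with δα < 1, β ≥ 0, and b_β > b_α. Define H(z) = D₁(z/b_α)^{m₁} + D₂(z/b_α)^{m₂} + 1/δ − z/r for z ∈ [b_α, b_β], and suppose H(b_α) = α, H'(b_α) = 0, H(b_β) = −β, H'(b_β) = 0. Define b_m = b_α·(−D₂m₂(m₂−1)/(D₁m₁(m₁−1)))^{1/(m₁−m₂)}. Then H''(b_m) = 0, H'' < 0 on (b_α, b_m), H'' > 0 on (b_m, b_β) (provided b_α < b_m < b_β), and consequently H'(z) < 0 for all z ∈ (b_α, b_β) with H' attaining its minimum at b_m. -/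
open Set

theorem stmt_11 (m₁ m₂ bα bβ D₁ D₂ r δ α β : ℝ)
    (hm₁ : 1 < m₁) (hm₂ : m₂ < 0) (hbα : 0 < bα) (hD₁ : 0 < D₁) (hD₂ : D₂ < 0)
    (hr : 0 < r) (hδ : 0 < δ) (hα : 0 ≤ α) (hδα : δ * α < 1) (hβ : 0 ≤ β)
    (hbb : bα < bβ)
    (H : ℝ → ℝ)
    (hH : ∀ z, H z = D₁ * (z / bα) ^ m₁ + D₂ * (z / bα) ^ m₂ + 1 / δ - z / r)
    (hHa : H bα = α) (hH'a : deriv H bα = 0) (hHb : H bβ = -β) (hH'b : deriv H bβ = 0)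
    (bm : ℝ)
    (hbm : bm = bα * (-D₂ * m₂ * (m₂ - 1) / (D₁ * m₁ * (m₁ - 1))) ^ (1 / (m₁ - m₂)))
    (hbmem : bα < bm ∧ bm < bβ) :
    deriv (deriv H) bm = 0
    ∧ (∀ z ∈ Set.Ioo bα bm, deriv (deriv H) z < 0)
    ∧ (∀ z ∈ Set.Ioo bm bβ, 0 < deriv (deriv H) z)
    ∧ (∀ z ∈ Set.Ioo bα bβ, deriv H z < 0)
    ∧ (∀ z ∈ Set.Ioo bα bβ, deriv H bm ≤ deriv H z) := by
  obtain ⟨hb1, hb2⟩ := hbmem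
  have hbm0 : 0 < bm := hbα.trans hb1
  set A : ℝ := D₁ * m₁ * (m₁ - 1) with hAdef
  set B : ℝ := -D₂ * m₂ * (m₂ - 1) with hBdef
  have hA : 0 < A := by
    have h1 : 0 < m₁ := by linarith
    have h2 : 0 < m₁ - 1 := by linarith
    positivity
  have hB : 0 < B := by
    have h1 : 0 < -D₂ := by linarith
    have : 0 < m₂ * (m₂ - 1) := mul_pos_of_neg_of_neg hm₂ (by linarith)
    nlinarith
  have hc : 0 < m₁ - m₂ := by linarith
  set G : ℝ → ℝ := fun z => D₁ * (m₁ / bα * (z / bα) ^ (m₁ - 1))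
      + D₂ * (m₂ / bα * (z / bα) ^ (m₂ - 1)) - 1 / r with hGdef
  set K : ℝ → ℝ := fun z => D₁ * (m₁ * (m₁ - 1) / bα ^ 2 * (z / bα) ^ (m₁ - 2))
      + D₂ * (m₂ * (m₂ - 1) / bα ^ 2 * (z / bα) ^ (m₂ - 2)) with hKdef
  -- derivative of basic power
  have hpow : ∀ (m z : ℝ), 0 < z →
      HasDerivAt (fun z => (z / bα) ^ m) (m / bα * (z / bα) ^ (m - 1)) z := by
    intro m z hz
    have hzb : 0 < z / bα := div_pos hz hbα
    have h1 : HasDerivAt (fun z : ℝ => z / bα) (1 / bα) z := (hasDerivAt_id z).div_const bα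
    have h2 := (Real.hasDerivAt_rpow_const (p := m) (Or.inl hzb.ne')).comp z h1
    refine h2.congr_deriv ?_
    ring
  have hHder : ∀ z, 0 < z → HasDerivAt H (G z) z := by
    intro z hz
    have e : H = fun z => D₁ * (z / bα) ^ m₁ + D₂ * (z / bα) ^ m₂ + 1 / δ - z / r :=
      funext hH
    rw [e]
    have h1 := (hpow m₁ z hz).const_mul D₁
    have h2 := (hpow m₂ z hz).const_mul D₂
    have h3 : HasDerivAt (fun z : ℝ => z / r) (1 / r) z := (hasDerivAt_id z).div_const r
    have h4 := ((h1.add h2).add_const (1 / δ)).sub h3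
    exact h4
  have hGder : ∀ z, 0 < z → HasDerivAt G (K z) z := by
    intro z hz
    have h1 := ((hpow (m₁ - 1) z hz).const_mul (m₁ / bα)).const_mul D₁
    have h2 := ((hpow (m₂ - 1) z hz).const_mul (m₂ / bα)).const_mul D₂
    have h4 := (h1.add h2).sub_const (1 / r)
    have e1 : m₁ - 1 - 1 = m₁ - 2 := by ring
    have e2 : m₂ - 1 - 1 = m₂ - 2 := by ring
    rw [e1, e2] at h4
    refine h4.congr_deriv ?_
    simp only [hKdef]
    ring
  have hderivH : ∀ z, 0 < z → deriv H z = G z := fun z hz => (hHder z hz).deriv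
  have hderiv2 : ∀ z, 0 < z → deriv (deriv H) z = K z := by
    intro z hz
    have heq : deriv H =ᶠ[nhds z] G :=
      Filter.eventuallyEq_of_mem (isOpen_Ioi.mem_nhds hz) fun x hx => hderivH x hx
    rw [heq.deriv_eq, (hGder z hz).deriv]
  -- factored form of K
  have hKform : ∀ z, 0 < z →
      K z = (z / bα) ^ (m₂ - 2) / bα ^ 2 * (A * (z / bα) ^ (m₁ - m₂) - B) := by
    intro z hz
    have hx : 0 < z / bα := div_pos hz hbα
    have h1 : (z / bα) ^ (m₁ - 2) = (z / bα) ^ (m₂ - 2) * (z / bα) ^ (m₁ - m₂) := by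
      rw [← Real.rpow_add hx]; ring_nf
    simp only [hKdef]
    rw [h1, hAdef, hBdef]
    ring
  -- value at bm
  have hbmA : (bm / bα) ^ (m₁ - m₂) = B / A := by
    have h1 : bm / bα = (B / A) ^ (1 / (m₁ - m₂)) := by
      rw [hbm]; field_simp
    rw [h1, ← Real.rpow_mul (div_nonneg hB.le hA.le), one_div_mul_cancel hc.ne',
      Real.rpow_one]
  have hAB : A * ((bm / bα) ^ (m₁ - m₂)) = B := by
    rw [hbmA]; field_simp
  -- sign of K
  have hKneg : ∀ z, 0 < z → z < bm → K z < 0 := by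
    intro z hz hzm
    rw [hKform z hz]
    have hx : 0 < z / bα := div_pos hz hbα
    have hmono : (z / bα) ^ (m₁ - m₂) < (bm / bα) ^ (m₁ - m₂) :=
      Real.rpow_lt_rpow hx.le (by gcongr) hc
    have h2 : A * (z / bα) ^ (m₁ - m₂) - B < 0 := by nlinarith
    have h3 : 0 < (z / bα) ^ (m₂ - 2) / bα ^ 2 := by
      have := Real.rpow_pos_of_pos hx (m₂ - 2); positivity
    exact mul_neg_of_pos_of_neg h3 h2
  have hKpos : ∀ z, bm < z → 0 < K z := by
    intro z hzm
    have hz : 0 < z := hbm0.trans hzm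
    rw [hKform z hz]
    have hx : 0 < z / bα := div_pos hz hbα
    have hmono : (bm / bα) ^ (m₁ - m₂) < (z / bα) ^ (m₁ - m₂) :=
      Real.rpow_lt_rpow (div_pos hbm0 hbα).le (by gcongr) hc
    have h2 : 0 < A * (z / bα) ^ (m₁ - m₂) - B := by nlinarith
    have h3 : 0 < (z / bα) ^ (m₂ - 2) / bα ^ 2 := by
      have := Real.rpow_pos_of_pos hx (m₂ - 2); positivity
    exact mul_pos h3 h2
  have hKbm : K bm = 0 := by
    rw [hKform bm hbm0, hAB]
    simp
  -- monotonicity of G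
  have hanti : StrictAntiOn G (Icc bα bm) := by
    apply strictAntiOn_of_deriv_neg (convex_Icc _ _)
    · exact fun x hx => ((hGder x (hbα.trans_le hx.1)).continuousAt).continuousWithinAt
    · intro x hx
      rw [interior_Icc] at hx
      rw [(hGder x (hbα.trans hx.1)).deriv]
      exact hKneg x (hbα.trans hx.1) hx.2
  have hmono : StrictMonoOn G (Icc bm bβ) := by
    apply strictMonoOn_of_deriv_pos (convex_Icc _ _)
    · exact fun x hx => ((hGder x (hbm0.trans_le hx.1)).continuousAt).continuousWithinAt
    · intro x hx
      rw [interior_Icc] at hx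
      rw [(hGder x (hbm0.trans hx.1)).deriv]
      exact hKpos x hx.1
  have hGa : G bα = 0 := by rw [← hderivH bα hbα]; exact hH'a
  have hGb : G bβ = 0 := by rw [← hderivH bβ (hbα.trans hbb)]; exact hH'b
  refine ⟨?_, ?_, ?_, ?_, ?_⟩
  · rw [hderiv2 bm hbm0]; exact hKbm
  · intro z hz
    rw [hderiv2 z (hbα.trans hz.1)]
    exact hKneg z (hbα.trans hz.1) hz.2
  · intro z hz
    rw [hderiv2 z (hbm0.trans hz.1)]
    exact hKpos z hz.1
  · intro z hz
    rw [hderivH z (hbα.trans hz.1)]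
    rcases le_or_gt z bm with hle | hlt
    · have := hanti ⟨le_refl _, hb1.le⟩ ⟨hz.1.le, hle⟩ hz.1
      linarith [hGa] -- G z < G bα = 0
    · have := hmono ⟨hlt.le, hz.2.le⟩ ⟨hb2.le, le_refl _⟩ hz.2
      linarith [hGb]
  · intro z hz
    rw [hderivH z (hbα.trans hz.1), hderivH bm hbm0]
    rcases le_or_gt z bm with hle | hlt
    · exact hanti.antitoneOn ⟨hz.1.le, hle⟩ ⟨hb1.le, le_refl _⟩ hle
    · exact hmono.monotoneOn ⟨le_refl _, hb2.le⟩ ⟨hlt.le, hz.2.le⟩ hlt.le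
end

section
/- Let θ ≠ 0, δ > 0, r > 0, γ > 0 with γ ≠ 1, and suppose K := r + (δ−r)/γ + ((γ−1)/(2γ²))θ² > 0. Let m₁ > 1 and m₂ < 0 be the roots of (θ²/2)m² + (δ−r−θ²/2)m − δ = 0. Then m₂ < −(1−γ)/γ < m₁. -/
theorem stmt_17 (θ δ r γ m₁ m₂ : ℝ) (hθ : θ ≠ 0) (hδ : 0 < δ) (hr : 0 < r)
    (hγ : 0 < γ) (hγ1 : γ ≠ 1)
    (hK : 0 < r + (δ - r) / γ + (γ - 1) / (2 * γ ^ 2) * θ ^ 2)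
    (hm₁ : 1 < m₁) (hm₂ : m₂ < 0)
    (hq₁ : θ ^ 2 / 2 * m₁ ^ 2 + (δ - r - θ ^ 2 / 2) * m₁ - δ = 0)
    (hq₂ : θ ^ 2 / 2 * m₂ ^ 2 + (δ - r - θ ^ 2 / 2) * m₂ - δ = 0) :
    m₂ < -(1 - γ) / γ ∧ -(1 - γ) / γ < m₁ := by
  have hγ0 : γ ≠ 0 := ne_of_gt hγ
  have hθ2 : (0:ℝ) < θ ^ 2 / 2 := by positivity
  have hne : m₁ - m₂ ≠ 0 := by intro h; nlinarith
  -- sum relation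
  have h1 : θ ^ 2 / 2 * (m₁ + m₂) + (δ - r - θ ^ 2 / 2) = 0 := by
    have h : (m₁ - m₂) * (θ ^ 2 / 2 * (m₁ + m₂) + (δ - r - θ ^ 2 / 2)) = 0 := by
      linear_combination hq₁ - hq₂
    rcases mul_eq_zero.1 h with h | h
    · exact absurd h hne
    · exact h
  -- product relation
  have h2 : δ = -(θ ^ 2 / 2) * (m₁ * m₂) := by
    linear_combination m₁ * h1 - hq₁
  -- K times γ²
  have hγ2 : (0:ℝ) < γ ^ 2 := by positivity
  have hKγ : 0 < r * γ ^ 2 + (δ - r) * γ + (γ - 1) / 2 * θ ^ 2 := by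
    have h := mul_pos hK hγ2
    have heq : (r + (δ - r) / γ + (γ - 1) / (2 * γ ^ 2) * θ ^ 2) * γ ^ 2
        = r * γ ^ 2 + (δ - r) * γ + (γ - 1) / 2 * θ ^ 2 := by
      field_simp
    linarith [heq ▸ h]
  -- factored quadratic at n = (γ-1)/γ, cleared of denominators
  have hqn : θ ^ 2 / 2 * (((γ - 1) - γ * m₁) * ((γ - 1) - γ * m₂))
      = -(r * γ ^ 2 + (δ - r) * γ + (γ - 1) / 2 * θ ^ 2) := by
    linear_combination (-(γ - 1) * γ) * h1 + γ ^ 2 * h2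
  have hAB : ((γ - 1) - γ * m₁) * ((γ - 1) - γ * m₂) < 0 := by
    nlinarith
  have hA : (γ - 1) - γ * m₁ < 0 := by nlinarith
  have hB : 0 < (γ - 1) - γ * m₂ := by nlinarith
  have e : -(1 - γ) / γ = (γ - 1) / γ := by ring
  rw [e]
  constructor
  · rw [lt_div_iff₀ hγ]; nlinarith
  · rw [div_lt_iff₀ hγ]; nlinarith
end
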